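/- Let (α_{ij}) be a real symmetric 3×3 matrix with det A ≠ 0, and let T_{ijkl} satisfy T_{ijkl} = −T_{jikl} = −T_{ijlk} = T_{klij}. Define γ_{ij} = (1/(2 det A)) · Σ_{k,l,m,p,q,r=1}^{3} ε_{klm} ε_{pqr} ( α_{kp} α_{lq} T_{mirj} − (1/4) α_{ij} α_{kp} T_{lmqr} ), where ε is the Levi-Civita symbol. Then γ is symmetric and satisfies γ_{ik}α_{jl} + α_{ik}γ_{jl} − γ_{il}α_{jk} − α_{il}γ_{jk} = T_{ijkl} for all i,j,k,l ∈ {1,2,3}. -/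
import Mathlib

open Matrix

/-- The Levi-Civita symbol on three indices, with `ε 0 1 2 = 1`. -/
def eps (i j k : Fin 3) : ℝ :=
  if (i, j, k) = (0, 1, 2) ∨ (i, j, k) = (1, 2, 0) ∨ (i, j, k) = (2, 0, 1) then 1
  else if (i, j, k) = (0, 2, 1) ∨ (i, j, k) = (2, 1, 0) ∨ (i, j, k) = (1, 0, 2) then -1
  else 0

theorem eps000 : eps 0 0 0 = 0 := rfl
theorem eps001 : eps 0 0 1 = 0 := rfl
theorem eps002 : eps 0 0 2 = 0 := rfl
theorem eps010 : eps 0 1 0 = 0 := rfl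
theorem eps011 : eps 0 1 1 = 0 := rfl
theorem eps012 : eps 0 1 2 = 1 := rfl
theorem eps020 : eps 0 2 0 = 0 := rfl
theorem eps021 : eps 0 2 1 = -1 := rfl
theorem eps022 : eps 0 2 2 = 0 := rfl
theorem eps100 : eps 1 0 0 = 0 := rfl
theorem eps101 : eps 1 0 1 = 0 := rfl
theorem eps102 : eps 1 0 2 = -1 := rfl
theorem eps110 : eps 1 1 0 = 0 := rfl
theorem eps111 : eps 1 1 1 = 0 := rfl
theorem eps112 : eps 1 1 2 = 0 := rfl
theorem eps120 : eps 1 2 0 = 1 := rfl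
theorem eps121 : eps 1 2 1 = 0 := rfl
theorem eps122 : eps 1 2 2 = 0 := rfl
theorem eps200 : eps 2 0 0 = 0 := rfl
theorem eps201 : eps 2 0 1 = 1 := rfl
theorem eps202 : eps 2 0 2 = 0 := rfl
theorem eps210 : eps 2 1 0 = -1 := rfl
theorem eps211 : eps 2 1 1 = 0 := rfl
theorem eps212 : eps 2 1 2 = 0 := rfl
theorem eps220 : eps 2 2 0 = 0 := rfl
theorem eps221 : eps 2 2 1 = 0 := rfl
theorem eps222 : eps 2 2 2 = 0 := rfl

theorem fm0 (h : 0 < 3) : (⟨0, h⟩ : Fin 3) = 0 := rfl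
theorem fm1 (h : 1 < 3) : (⟨1, h⟩ : Fin 3) = 1 := rfl
theorem fm2 (h : 2 < 3) : (⟨2, h⟩ : Fin 3) = 2 := rfl

set_option maxHeartbeats 4000000 in
theorem linearized_gauss_explicit_solution (A : Matrix (Fin 3) (Fin 3) ℝ)
    (hA : A.IsSymm) (hdet : A.det ≠ 0)
    (T : Fin 3 → Fin 3 → Fin 3 → Fin 3 → ℝ)
    (hT1 : ∀ i j k l, T i j k l = -T j i k l)
    (hT2 : ∀ i j k l, T i j k l = -T i j l k)
    (hT3 : ∀ i j k l, T i j k l = T k l i j)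
    (G : Matrix (Fin 3) (Fin 3) ℝ)
    (hG : ∀ i j, G i j = (1 / (2 * A.det)) *
      ∑ k : Fin 3, ∑ l : Fin 3, ∑ m : Fin 3, ∑ p : Fin 3, ∑ q : Fin 3, ∑ r : Fin 3,
        eps k l m * eps p q r *
          (A k p * A l q * T m i r j - (1 / 4) * A i j * A k p * T l m q r)) :
    G.IsSymm ∧
      ∀ i j k l, G i k * A j l + A i k * G j l - G i l * A j k - A i l * G j k
        = T i j k l := by
  have h2 : (2:ℝ) * A.det ≠ 0 := mul_ne_zero two_ne_zero hdet
  have ha10 : A 1 0 = A 0 1 := hA.apply 0 1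
  have ha20 : A 2 0 = A 0 2 := hA.apply 0 2
  have ha21 : A 2 1 = A 1 2 := hA.apply 1 2
  have tz1 : ∀ i k l, T i i k l = 0 := fun i k l => by have := hT1 i i k l; linarith
  have tz2 : ∀ i j k, T i j k k = 0 := fun i j k => by have := hT2 i j k k; linarith
  have ta10 : ∀ k l, T 1 0 k l = -T 0 1 k l := fun k l => hT1 1 0 k l
  have ta20 : ∀ k l, T 2 0 k l = -T 0 2 k l := fun k l => hT1 2 0 k l
  have ta21 : ∀ k l, T 2 1 k l = -T 1 2 k l := fun k l => hT1 2 1 k l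
  have tb10 : ∀ i j, T i j 1 0 = -T i j 0 1 := fun i j => hT2 i j 1 0
  have tb20 : ∀ i j, T i j 2 0 = -T i j 0 2 := fun i j => hT2 i j 2 0
  have tb21 : ∀ i j, T i j 2 1 = -T i j 1 2 := fun i j => hT2 i j 2 1
  have tc1 : T 0 2 0 1 = T 0 1 0 2 := hT3 0 2 0 1
  have tc2 : T 1 2 0 1 = T 0 1 1 2 := hT3 1 2 0 1
  have tc3 : T 1 2 0 2 = T 0 2 1 2 := hT3 1 2 0 2
  have key : ∀ i j, 2 * A.det * G i j = ∑ k : Fin 3, ∑ l : Fin 3, ∑ m : Fin 3,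
      ∑ p : Fin 3, ∑ q : Fin 3, ∑ r : Fin 3,
      eps k l m * eps p q r *
        (A k p * A l q * T m i r j - (1 / 4) * A i j * A k p * T l m q r) := by
    intro i j
    rw [hG i j, ← mul_assoc, mul_one_div, div_self h2, one_mul]
  have e00 := key 0 0
  simp only [Fin.sum_univ_three, eps000, eps001, eps002, eps010, eps011, eps012, eps020, eps021, eps022, eps100, eps101, eps102, eps110, eps111, eps112, eps120, eps121, eps122, eps200, eps201, eps202, eps210, eps211, eps212, eps220, eps221, eps222, Matrix.det_fin_three, ha10, ha20, ha21, tz1, tz2, ta10, ta20, ta21, tb10, tb20, tb21, tc1, tc2, tc3, mul_zero, zero_mul, mul_one, one_mul, mul_neg, neg_mul, neg_neg, neg_zero, add_zero, zero_add, sub_zero, zero_sub] at e00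
  have e01 := key 0 1
  simp only [Fin.sum_univ_three, eps000, eps001, eps002, eps010, eps011, eps012, eps020, eps021, eps022, eps100, eps101, eps102, eps110, eps111, eps112, eps120, eps121, eps122, eps200, eps201, eps202, eps210, eps211, eps212, eps220, eps221, eps222, Matrix.det_fin_three, ha10, ha20, ha21, tz1, tz2, ta10, ta20, ta21, tb10, tb20, tb21, tc1, tc2, tc3, mul_zero, zero_mul, mul_one, one_mul, mul_neg, neg_mul, neg_neg, neg_zero, add_zero, zero_add, sub_zero, zero_sub] at e01
  have e02 := key 0 2
  simp only [Fin.sum_univ_three, eps000, eps001, eps002, eps010, eps011, eps012, eps020, eps021, eps022, eps100, eps101, eps102, eps110, eps111, eps112, eps120, eps121, eps122, eps200, eps201, eps202, eps210, eps211, eps212, eps220, eps221, eps222, Matrix.det_fin_three, ha10, ha20, ha21, tz1, tz2, ta10, ta20, ta21, tb10, tb20, tb21, tc1, tc2, tc3, mul_zero, zero_mul, mul_one, one_mul, mul_neg, neg_mul, neg_neg, neg_zero, add_zero, zero_add, sub_zero, zero_sub] at e02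
  have e10 := key 1 0
  simp only [Fin.sum_univ_three, eps000, eps001, eps002, eps010, eps011, eps012, eps020, eps021, eps022, eps100, eps101, eps102, eps110, eps111, eps112, eps120, eps121, eps122, eps200, eps201, eps202, eps210, eps211, eps212, eps220, eps221, eps222, Matrix.det_fin_three, ha10, ha20, ha21, tz1, tz2, ta10, ta20, ta21, tb10, tb20, tb21, tc1, tc2, tc3, mul_zero, zero_mul, mul_one, one_mul, mul_neg, neg_mul, neg_neg, neg_zero, add_zero, zero_add, sub_zero, zero_sub] at e10
  have e11 := key 1 1
  simp only [Fin.sum_univ_three, eps000, eps001, eps002, eps010, eps011, eps012, eps020, eps021, eps022, eps100, eps101, eps102, eps110, eps111, eps112, eps120, eps121, eps122, eps200, eps201, eps202, eps210, eps211, eps212, eps220, eps221, eps222, Matrix.det_fin_three, ha10, ha20, ha21, tz1, tz2, ta10, ta20, ta21, tb10, tb20, tb21, tc1, tc2, tc3, mul_zero, zero_mul, mul_one, one_mul, mul_neg, neg_mul, neg_neg, neg_zero, add_zero, zero_add, sub_zero, zero_sub] at e11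
  have e12 := key 1 2
  simp only [Fin.sum_univ_three, eps000, eps001, eps002, eps010, eps011, eps012, eps020, eps021, eps022, eps100, eps101, eps102, eps110, eps111, eps112, eps120, eps121, eps122, eps200, eps201, eps202, eps210, eps211, eps212, eps220, eps221, eps222, Matrix.det_fin_three, ha10, ha20, ha21, tz1, tz2, ta10, ta20, ta21, tb10, tb20, tb21, tc1, tc2, tc3, mul_zero, zero_mul, mul_one, one_mul, mul_neg, neg_mul, neg_neg, neg_zero, add_zero, zero_add, sub_zero, zero_sub] at e12
  have e20 := key 2 0
  simp only [Fin.sum_univ_three, eps000, eps001, eps002, eps010, eps011, eps012, eps020, eps021, eps022, eps100, eps101, eps102, eps110, eps111, eps112, eps120, eps121, eps122, eps200, eps201, eps202, eps210, eps211, eps212, eps220, eps221, eps222, Matrix.det_fin_three, ha10, ha20, ha21, tz1, tz2, ta10, ta20, ta21, tb10, tb20, tb21, tc1, tc2, tc3, mul_zero, zero_mul, mul_one, one_mul, mul_neg, neg_mul, neg_neg, neg_zero, add_zero, zero_add, sub_zero, zero_sub] at e20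
  have e21 := key 2 1
  simp only [Fin.sum_univ_three, eps000, eps001, eps002, eps010, eps011, eps012, eps020, eps021, eps022, eps100, eps101, eps102, eps110, eps111, eps112, eps120, eps121, eps122, eps200, eps201, eps202, eps210, eps211, eps212, eps220, eps221, eps222, Matrix.det_fin_three, ha10, ha20, ha21, tz1, tz2, ta10, ta20, ta21, tb10, tb20, tb21, tc1, tc2, tc3, mul_zero, zero_mul, mul_one, one_mul, mul_neg, neg_mul, neg_neg, neg_zero, add_zero, zero_add, sub_zero, zero_sub] at e21
  have e22 := key 2 2
  simp only [Fin.sum_univ_three, eps000, eps001, eps002, eps010, eps011, eps012, eps020, eps021, eps022, eps100, eps101, eps102, eps110, eps111, eps112, eps120, eps121, eps122, eps200, eps201, eps202, eps210, eps211, eps212, eps220, eps221, eps222, Matrix.det_fin_three, ha10, ha20, ha21, tz1, tz2, ta10, ta20, ta21, tb10, tb20, tb21, tc1, tc2, tc3, mul_zero, zero_mul, mul_one, one_mul, mul_neg, neg_mul, neg_neg, neg_zero, add_zero, zero_add, sub_zero, zero_sub] at e22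
  constructor
  · ext i j
    rw [Matrix.transpose_apply]
    refine mul_left_cancel₀ h2 ?_
    rw [Matrix.det_fin_three, ha10, ha20, ha21]
    fin_cases i <;> fin_cases j <;> simp only [fm0, fm1, fm2]
    · linear_combination e10 - e01
    · linear_combination e20 - e02
    · linear_combination e01 - e10
    · linear_combination e21 - e12
    · linear_combination e02 - e20
    · linear_combination e12 - e21
  · intro i j k l
    refine mul_left_cancel₀ h2 ?_
    rw [Matrix.det_fin_three, ha10, ha20, ha21]
    fin_cases i <;> fin_cases j <;> fin_cases k <;> fin_cases l <;>
      simp only [fm0, fm1, fm2, ha10, ha20, ha21, tz1, tz2, ta10, ta20, ta21, tb10, tb20, tb21, tc1, tc2, tc3]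
    · linear_combination A 0 0 * e00 + A 0 0 * e00 - A 0 0 * e00 - A 0 0 * e00
    · linear_combination A 0 1 * e00 + A 0 0 * e01 - A 0 0 * e01 - A 0 1 * e00
    · linear_combination A 0 2 * e00 + A 0 0 * e02 - A 0 0 * e02 - A 0 2 * e00
    · linear_combination A 0 0 * e01 + A 0 1 * e00 - A 0 1 * e00 - A 0 0 * e01
    · linear_combination A 0 1 * e01 + A 0 1 * e01 - A 0 1 * e01 - A 0 1 * e01
    · linear_combination A 0 2 * e01 + A 0 1 * e02 - A 0 1 * e02 - A 0 2 * e01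
    · linear_combination A 0 0 * e02 + A 0 2 * e00 - A 0 2 * e00 - A 0 0 * e02
    · linear_combination A 0 1 * e02 + A 0 2 * e01 - A 0 2 * e01 - A 0 1 * e02
    · linear_combination A 0 2 * e02 + A 0 2 * e02 - A 0 2 * e02 - A 0 2 * e02
    · linear_combination A 0 1 * e00 + A 0 0 * e10 - A 0 1 * e00 - A 0 0 * e10
    · linear_combination A 1 1 * e00 + A 0 0 * e11 - A 0 1 * e01 - A 0 1 * e10
    · linear_combination A 1 2 * e00 + A 0 0 * e12 - A 0 1 * e02 - A 0 2 * e10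
    · linear_combination A 0 1 * e01 + A 0 1 * e10 - A 1 1 * e00 - A 0 0 * e11
    · linear_combination A 1 1 * e01 + A 0 1 * e11 - A 1 1 * e01 - A 0 1 * e11
    · linear_combination A 1 2 * e01 + A 0 1 * e12 - A 1 1 * e02 - A 0 2 * e11
    · linear_combination A 0 1 * e02 + A 0 2 * e10 - A 1 2 * e00 - A 0 0 * e12
    · linear_combination A 1 1 * e02 + A 0 2 * e11 - A 1 2 * e01 - A 0 1 * e12
    · linear_combination A 1 2 * e02 + A 0 2 * e12 - A 1 2 * e02 - A 0 2 * e12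
    · linear_combination A 0 2 * e00 + A 0 0 * e20 - A 0 2 * e00 - A 0 0 * e20
    · linear_combination A 1 2 * e00 + A 0 0 * e21 - A 0 2 * e01 - A 0 1 * e20
    · linear_combination A 2 2 * e00 + A 0 0 * e22 - A 0 2 * e02 - A 0 2 * e20
    · linear_combination A 0 2 * e01 + A 0 1 * e20 - A 1 2 * e00 - A 0 0 * e21
    · linear_combination A 1 2 * e01 + A 0 1 * e21 - A 1 2 * e01 - A 0 1 * e21
    · linear_combination A 2 2 * e01 + A 0 1 * e22 - A 1 2 * e02 - A 0 2 * e21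
    · linear_combination A 0 2 * e02 + A 0 2 * e20 - A 2 2 * e00 - A 0 0 * e22
    · linear_combination A 1 2 * e02 + A 0 2 * e21 - A 2 2 * e01 - A 0 1 * e22
    · linear_combination A 2 2 * e02 + A 0 2 * e22 - A 2 2 * e02 - A 0 2 * e22
    · linear_combination A 0 0 * e10 + A 0 1 * e00 - A 0 0 * e10 - A 0 1 * e00
    · linear_combination A 0 1 * e10 + A 0 1 * e01 - A 0 0 * e11 - A 1 1 * e00
    · linear_combination A 0 2 * e10 + A 0 1 * e02 - A 0 0 * e12 - A 1 2 * e00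
    · linear_combination A 0 0 * e11 + A 1 1 * e00 - A 0 1 * e10 - A 0 1 * e01
    · linear_combination A 0 1 * e11 + A 1 1 * e01 - A 0 1 * e11 - A 1 1 * e01
    · linear_combination A 0 2 * e11 + A 1 1 * e02 - A 0 1 * e12 - A 1 2 * e01
    · linear_combination A 0 0 * e12 + A 1 2 * e00 - A 0 2 * e10 - A 0 1 * e02
    · linear_combination A 0 1 * e12 + A 1 2 * e01 - A 0 2 * e11 - A 1 1 * e02
    · linear_combination A 0 2 * e12 + A 1 2 * e02 - A 0 2 * e12 - A 1 2 * e02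
    · linear_combination A 0 1 * e10 + A 0 1 * e10 - A 0 1 * e10 - A 0 1 * e10
    · linear_combination A 1 1 * e10 + A 0 1 * e11 - A 0 1 * e11 - A 1 1 * e10
    · linear_combination A 1 2 * e10 + A 0 1 * e12 - A 0 1 * e12 - A 1 2 * e10
    · linear_combination A 0 1 * e11 + A 1 1 * e10 - A 1 1 * e10 - A 0 1 * e11
    · linear_combination A 1 1 * e11 + A 1 1 * e11 - A 1 1 * e11 - A 1 1 * e11
    · linear_combination A 1 2 * e11 + A 1 1 * e12 - A 1 1 * e12 - A 1 2 * e11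
    · linear_combination A 0 1 * e12 + A 1 2 * e10 - A 1 2 * e10 - A 0 1 * e12
    · linear_combination A 1 1 * e12 + A 1 2 * e11 - A 1 2 * e11 - A 1 1 * e12
    · linear_combination A 1 2 * e12 + A 1 2 * e12 - A 1 2 * e12 - A 1 2 * e12
    · linear_combination A 0 2 * e10 + A 0 1 * e20 - A 0 2 * e10 - A 0 1 * e20
    · linear_combination A 1 2 * e10 + A 0 1 * e21 - A 0 2 * e11 - A 1 1 * e20
    · linear_combination A 2 2 * e10 + A 0 1 * e22 - A 0 2 * e12 - A 1 2 * e20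
    · linear_combination A 0 2 * e11 + A 1 1 * e20 - A 1 2 * e10 - A 0 1 * e21
    · linear_combination A 1 2 * e11 + A 1 1 * e21 - A 1 2 * e11 - A 1 1 * e21
    · linear_combination A 2 2 * e11 + A 1 1 * e22 - A 1 2 * e12 - A 1 2 * e21
    · linear_combination A 0 2 * e12 + A 1 2 * e20 - A 2 2 * e10 - A 0 1 * e22
    · linear_combination A 1 2 * e12 + A 1 2 * e21 - A 2 2 * e11 - A 1 1 * e22
    · linear_combination A 2 2 * e12 + A 1 2 * e22 - A 2 2 * e12 - A 1 2 * e22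
    · linear_combination A 0 0 * e20 + A 0 2 * e00 - A 0 0 * e20 - A 0 2 * e00
    · linear_combination A 0 1 * e20 + A 0 2 * e01 - A 0 0 * e21 - A 1 2 * e00
    · linear_combination A 0 2 * e20 + A 0 2 * e02 - A 0 0 * e22 - A 2 2 * e00
    · linear_combination A 0 0 * e21 + A 1 2 * e00 - A 0 1 * e20 - A 0 2 * e01
    · linear_combination A 0 1 * e21 + A 1 2 * e01 - A 0 1 * e21 - A 1 2 * e01
    · linear_combination A 0 2 * e21 + A 1 2 * e02 - A 0 1 * e22 - A 2 2 * e01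
    · linear_combination A 0 0 * e22 + A 2 2 * e00 - A 0 2 * e20 - A 0 2 * e02
    · linear_combination A 0 1 * e22 + A 2 2 * e01 - A 0 2 * e21 - A 1 2 * e02
    · linear_combination A 0 2 * e22 + A 2 2 * e02 - A 0 2 * e22 - A 2 2 * e02
    · linear_combination A 0 1 * e20 + A 0 2 * e10 - A 0 1 * e20 - A 0 2 * e10
    · linear_combination A 1 1 * e20 + A 0 2 * e11 - A 0 1 * e21 - A 1 2 * e10
    · linear_combination A 1 2 * e20 + A 0 2 * e12 - A 0 1 * e22 - A 2 2 * e10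
    · linear_combination A 0 1 * e21 + A 1 2 * e10 - A 1 1 * e20 - A 0 2 * e11
    · linear_combination A 1 1 * e21 + A 1 2 * e11 - A 1 1 * e21 - A 1 2 * e11
    · linear_combination A 1 2 * e21 + A 1 2 * e12 - A 1 1 * e22 - A 2 2 * e11
    · linear_combination A 0 1 * e22 + A 2 2 * e10 - A 1 2 * e20 - A 0 2 * e12
    · linear_combination A 1 1 * e22 + A 2 2 * e11 - A 1 2 * e21 - A 1 2 * e12
    · linear_combination A 1 2 * e22 + A 2 2 * e12 - A 1 2 * e22 - A 2 2 * e12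
    · linear_combination A 0 2 * e20 + A 0 2 * e20 - A 0 2 * e20 - A 0 2 * e20
    · linear_combination A 1 2 * e20 + A 0 2 * e21 - A 0 2 * e21 - A 1 2 * e20
    · linear_combination A 2 2 * e20 + A 0 2 * e22 - A 0 2 * e22 - A 2 2 * e20
    · linear_combination A 0 2 * e21 + A 1 2 * e20 - A 1 2 * e20 - A 0 2 * e21
    · linear_combination A 1 2 * e21 + A 1 2 * e21 - A 1 2 * e21 - A 1 2 * e21
    · linear_combination A 2 2 * e21 + A 1 2 * e22 - A 1 2 * e22 - A 2 2 * e21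
    · linear_combination A 0 2 * e22 + A 2 2 * e20 - A 2 2 * e20 - A 0 2 * e22
    · linear_combination A 1 2 * e22 + A 2 2 * e21 - A 2 2 * e21 - A 1 2 * e22
    · linear_combination A 2 2 * e22 + A 2 2 * e22 - A 2 2 * e22 - A 2 2 * e22
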